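/- arXiv:1209.3112 — 2 statements merged into one kernel-verified Lean document; each statement's English description precedes it below -/
import Mathlib

section
/- In a covering random forest on H (every vertex of H belongs to some tree T(x), x ∈ ∂H, and T(x) ⊆ C(x)), if almost surely all but finitely many trees T(i) satisfy h(T(i)) < |i|, then there is a contradiction with full coverage of the cone C(0): there exist infinitely many vertices of C(0) not covered. Hence E[h(T(0))] = ∞ for the translation-invariant covering forest. -/
open MeasureTheory ENNReal

/-- The rotated upper half-plane lattice `H = {(x,y) : x + y even, y ≥ 0}`. -/
def Hlat : Set (ℤ × ℤ) := {v | Even (v.1 + v.2) ∧ 0 ≤ v.2}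

/-- The cone of `x`: all vertices `x + i·θ_l + j·θ_r`, `i,j ≥ 0`,
with `θ_l = (-1,1)`, `θ_r = (1,1)`. -/
def cone (x : ℤ × ℤ) : Set (ℤ × ℤ) :=
  {v | ∃ i j : ℕ, v = x + (i : ℤ) • ((-1, 1) : ℤ × ℤ) + (j : ℤ) • ((1, 1) : ℤ × ℤ)}

/-- The height of a tree: the supremum of the levels of its vertices. -/
noncomputable def treeHeight (S : Set (ℤ × ℤ)) : ℝ≥0∞ :=
  ⨆ v ∈ S, (v.2.toNat : ℝ≥0∞)

/-- Partial sums of indicators of `n+1 ≤ c` are at most `c`. -/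
lemma partial_sum_indicator_le (c : ℝ≥0∞) (N : ℕ) :
    ∑ n ∈ Finset.range N, (if ((n : ℝ≥0∞) + 1 ≤ c) then (1 : ℝ≥0∞) else 0) ≤ c := by
  induction N with
  | zero => simp
  | succ N ih =>
    by_cases h : ((N : ℝ≥0∞) + 1 ≤ c)
    · calc ∑ n ∈ Finset.range (N + 1),
            (if ((n : ℝ≥0∞) + 1 ≤ c) then (1 : ℝ≥0∞) else 0)
          ≤ ∑ _n ∈ Finset.range (N + 1), (1 : ℝ≥0∞) := by
            apply Finset.sum_le_sum; intro n _; split <;> simp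
        _ = (N : ℝ≥0∞) + 1 := by simp
        _ ≤ c := h
    · rw [Finset.sum_range_succ, if_neg h, add_zero]
      exact ih

/-- Layer-cake tail bound: `∑ₙ μ {f ≥ n+1} ≤ ∫ f`. -/
lemma tsum_tail_measure_le {Ω : Type*} [MeasurableSpace Ω] (P : Measure Ω)
    (f : Ω → ℝ≥0∞) (hf : Measurable f) :
    ∑' n : ℕ, P {ω | (n : ℝ≥0∞) + 1 ≤ f ω} ≤ ∫⁻ ω, f ω ∂P := by
  have hset : ∀ n : ℕ, MeasurableSet {ω | (n : ℝ≥0∞) + 1 ≤ f ω} :=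
    fun n => hf measurableSet_Ici
  calc ∑' n : ℕ, P {ω | (n : ℝ≥0∞) + 1 ≤ f ω}
      = ∑' n : ℕ, ∫⁻ ω, Set.indicator {ω | (n : ℝ≥0∞) + 1 ≤ f ω}
          (1 : Ω → ℝ≥0∞) ω ∂P := by
        refine tsum_congr fun n => ?_
        rw [lintegral_indicator_one (hset n)]
    _ = ∫⁻ ω, ∑' n : ℕ, Set.indicator {ω | (n : ℝ≥0∞) + 1 ≤ f ω}
          (1 : Ω → ℝ≥0∞) ω ∂P :=
        (lintegral_tsum fun n => (measurable_const.indicator (hset n)).aemeasurable).symm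
    _ ≤ ∫⁻ ω, f ω ∂P := by
        refine lintegral_mono fun ω => ?_
        simp only [Set.indicator_apply, Set.mem_setOf_eq, Pi.one_apply]
        rw [ENNReal.tsum_eq_iSup_sum' (fun N => Finset.range N)
          (fun s => Finset.exists_nat_subset_range s)]
        exact iSup_le fun N => partial_sum_indicator_le (f ω) N

/-- If `f` has finite mean under a probability measure, the level-set measures
`P {f ≥ n}` have finite sum. -/
lemma tsum_level_measure_ne_top {Ω : Type*} [MeasurableSpace Ω] (P : Measure Ω)
    [IsProbabilityMeasure P] (f : Ω → ℝ≥0∞) (hf : Measurable f)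
    (hfin : ∫⁻ ω, f ω ∂P ≠ ⊤) :
    ∑' n : ℕ, P {ω | ((n : ℕ) : ℝ≥0∞) ≤ f ω} ≠ ⊤ := by
  have htail : ∑' n : ℕ, P {ω | (((n + 1 : ℕ)) : ℝ≥0∞) ≤ f ω} ≤ ∫⁻ ω, f ω ∂P := by
    have h := tsum_tail_measure_le P f hf
    refine le_trans (le_of_eq (tsum_congr fun n => congrArg P (Set.ext fun ω => ?_))) h
    simp only [Set.mem_setOf_eq]
    push_cast
    rfl
  rw [tsum_eq_zero_add' ENNReal.summable]
  exact ENNReal.add_ne_top.2 ⟨ne_top_of_le_ne_top one_ne_top prob_le_one,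
    ne_top_of_le_ne_top hfin htail⟩

/-- A sum over `ℤ` of values depending only on `natAbs` splits into two `ℕ`-sums. -/
lemma tsum_int_natAbs_eq (q : ℕ → ℝ≥0∞) :
    ∑' k : ℤ, q k.natAbs = (∑' n : ℕ, q n) + ∑' n : ℕ, q (n + 1) := by
  have hrec : ∀ k : ℤ, q k.natAbs =
      Int.rec (motive := fun _ => ℝ≥0∞) (fun n : ℕ => q n) (fun n : ℕ => q (n + 1)) k := by
    intro k; cases k <;> rfl
  rw [tsum_congr hrec]
  exact tsum_int_rec ENNReal.summable ENNReal.summable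

/-- Borel–Cantelli: if the measures of countably many events have finite sum, then
almost surely only finitely many of them occur. -/
lemma ae_finite_of_tsum_ne_top {Ω : Type*} [MeasurableSpace Ω] (P : Measure Ω)
    (A : ℤ → Set Ω) (hA : ∀ k, MeasurableSet (A k))
    (h : ∑' k : ℤ, P (A k) ≠ ⊤) :
    ∀ᵐ ω ∂P, {k : ℤ | ω ∈ A k}.Finite := by
  have hgmeas : Measurable (fun ω => ∑' k : ℤ, (A k).indicator (1 : Ω → ℝ≥0∞) ω) :=
    Measurable.ennreal_tsum fun k => measurable_const.indicator (hA k)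
  have hgint : ∫⁻ ω, (∑' k : ℤ, (A k).indicator (1 : Ω → ℝ≥0∞) ω) ∂P ≠ ⊤ := by
    have hswap := lintegral_tsum (μ := P) (f := fun k => (A k).indicator (1 : Ω → ℝ≥0∞))
      fun k => (measurable_const.indicator (hA k)).aemeasurable
    rw [hswap, tsum_congr fun k => lintegral_indicator_one (hA k)]
    exact h
  filter_upwards [ae_lt_top hgmeas hgint] with ω hg
  by_contra hinf
  have hinf' : Set.Infinite {k : ℤ | ω ∈ A k} := hinf
  obtain ⟨N, hN⟩ := ENNReal.exists_nat_gt hg.ne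
  obtain ⟨s, hs_sub, hs_card⟩ := hinf'.exists_subset_card_eq N
  have hle : (N : ℝ≥0∞) ≤ ∑' k : ℤ, (A k).indicator (1 : Ω → ℝ≥0∞) ω := by
    calc (N : ℝ≥0∞) = ∑ k ∈ s, (A k).indicator (1 : Ω → ℝ≥0∞) ω := by
          have hone : ∀ k ∈ s, (A k).indicator (1 : Ω → ℝ≥0∞) ω = 1 :=
            fun k hk => Set.indicator_of_mem (show ω ∈ A k from hs_sub hk) (1 : Ω → ℝ≥0∞)
          rw [Finset.sum_congr rfl hone]
          simp [hs_card]
      _ ≤ _ := ENNReal.sum_le_tsum s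
  exact absurd hN (not_lt.2 hle)

/-- In a covering random forest on `H` (every vertex of `H` belongs a.s. to some tree
`T(k)` rooted at `(2k,0)` with `T(k) ⊆ C((2k,0))`) whose tree heights are identically
distributed, the expected height is infinite: `E[h(T(0))] = ∞`.  (Otherwise, by
Borel–Cantelli all but finitely many trees would satisfy `h(T(i)) < |i|`, leaving
infinitely many vertices of `C(0)` uncovered.) -/
theorem covering_forest_infinite_mean_height {Ω : Type*} [MeasurableSpace Ω]
    (P : Measure Ω) [IsProbabilityMeasure P] (T : ℤ → Ω → Set (ℤ × ℤ))
    (hcone : ∀ (k : ℤ) (ω : Ω), T k ω ⊆ cone (2 * k, 0))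
    (hcover : ∀ᵐ ω ∂P, ∀ v ∈ Hlat, ∃ k, v ∈ T k ω)
    (hmeas : ∀ k, Measurable fun ω => treeHeight (T k ω))
    (hid : ∀ k : ℤ, Measure.map (fun ω => treeHeight (T k ω)) P =
      Measure.map (fun ω => treeHeight (T 0 ω)) P) :
    ∫⁻ ω, treeHeight (T 0 ω) ∂P = ⊤ := by
  by_contra hfin
  -- identical distribution of measurable events
  have hmapset : ∀ (k : ℤ) (s : Set ℝ≥0∞), MeasurableSet s →
      P ((fun ω => treeHeight (T k ω)) ⁻¹' s) = P ((fun ω => treeHeight (T 0 ω)) ⁻¹' s) := by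
    intro k s hs
    rw [← Measure.map_apply (hmeas k) hs, hid k, Measure.map_apply (hmeas 0) hs]
  -- the events A k = {ω | |k| ≤ h(T k ω)}
  have hAmeas : ∀ k : ℤ, MeasurableSet {ω | ((k.natAbs : ℕ) : ℝ≥0∞) ≤ treeHeight (T k ω)} :=
    fun k => (hmeas k) measurableSet_Ici
  have hPA : ∀ k : ℤ, P {ω | ((k.natAbs : ℕ) : ℝ≥0∞) ≤ treeHeight (T k ω)}
      = P {ω | ((k.natAbs : ℕ) : ℝ≥0∞) ≤ treeHeight (T 0 ω)} := fun k =>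
    hmapset k (Set.Ici ((k.natAbs : ℕ) : ℝ≥0∞)) measurableSet_Ici
  have hq : ∑' n : ℕ, P {ω | ((n : ℕ) : ℝ≥0∞) ≤ treeHeight (T 0 ω)} ≠ ⊤ :=
    tsum_level_measure_ne_top P _ (hmeas 0) hfin
  have hq' : ∑' n : ℕ, P {ω | (((n + 1 : ℕ)) : ℝ≥0∞) ≤ treeHeight (T 0 ω)} ≠ ⊤ := by
    rw [tsum_eq_zero_add' ENNReal.summable] at hq
    exact (ENNReal.add_ne_top.1 hq).2
  have key : ∑' k : ℤ, P {ω | ((k.natAbs : ℕ) : ℝ≥0∞) ≤ treeHeight (T k ω)} ≠ ⊤ := by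
    rw [tsum_congr hPA,
      tsum_int_natAbs_eq (fun m => P {ω | ((m : ℕ) : ℝ≥0∞) ≤ treeHeight (T 0 ω)})]
    exact ENNReal.add_ne_top.2 ⟨hq, hq'⟩
  -- Borel–Cantelli and a.s. finite heights
  have hBC := ae_finite_of_tsum_ne_top P _ hAmeas key
  have hae2 : ∀ᵐ ω ∂P, ∀ k : ℤ, treeHeight (T k ω) ≠ ⊤ := by
    rw [ae_all_iff]
    intro k
    have h0 : P {ω | treeHeight (T 0 ω) = ⊤} = 0 := by
      have h := ae_lt_top (hmeas 0) hfin
      rw [ae_iff] at h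
      simpa [lt_top_iff_ne_top] using h
    have hk : P {ω | treeHeight (T k ω) = ⊤} = 0 := by
      have h := hmapset k {⊤} (measurableSet_singleton ⊤)
      simpa [Set.preimage, Set.mem_singleton_iff, h0] using h
    rw [ae_iff]
    simpa using hk
  -- pick a good ω
  obtain ⟨ω, hcov, hFfin, hfinh⟩ := (hcover.and (hBC.and hae2)).exists
  -- the maximal relevant height
  have hMne : (∑ k ∈ hFfin.toFinset, treeHeight (T k ω)) ≠ ⊤ := by
    rw [← lt_top_iff_ne_top, ENNReal.sum_lt_top]
    exact fun k _ => lt_top_iff_ne_top.2 (hfinh k)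
  obtain ⟨n, hn⟩ := ENNReal.exists_nat_gt hMne
  -- the vertex (0, 2n) is covered
  have hv : ((0 : ℤ), (2 * n : ℤ)) ∈ Hlat := by
    constructor
    · exact ⟨(n : ℤ), by push_cast; ring⟩
    · positivity
  obtain ⟨k, hk⟩ := hcov _ hv
  obtain ⟨i, j, hij⟩ := hcone k ω hk
  have hij' : (0 : ℤ) = 2 * k - (i : ℤ) + (j : ℤ) ∧ (2 * n : ℤ) = (i : ℤ) + (j : ℤ) := by
    rw [Prod.ext_iff] at hij
    simp only [Prod.fst_add, Prod.snd_add, Prod.smul_mk, smul_eq_mul] at hij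
    constructor
    · exact hij.1.trans (by ring)
    · exact hij.2.trans (by ring)
  have hkn : k.natAbs ≤ n := by omega
  -- height of T k is at least 2n
  have hht : ((2 * n : ℕ) : ℝ≥0∞) ≤ treeHeight (T k ω) := by
    have h := le_iSup₂ (f := fun (v : ℤ × ℤ) (_ : v ∈ T k ω) => ((v.2.toNat : ℕ) : ℝ≥0∞))
      ((0 : ℤ), (2 * n : ℤ)) hk
    have h2 : ((2 * (n : ℤ)).toNat : ℕ) = 2 * n := by omega
    simpa [treeHeight, h2] using h
  have hkF : k ∈ hFfin.toFinset := by
    rw [Set.Finite.mem_toFinset]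
    show ((k.natAbs : ℕ) : ℝ≥0∞) ≤ treeHeight (T k ω)
    refine le_trans ?_ hht
    exact Nat.cast_le.2 (le_trans hkn (by omega))
  have hle : treeHeight (T k ω) ≤ ∑ k ∈ hFfin.toFinset, treeHeight (T k ω) :=
    Finset.single_le_sum (f := fun k => treeHeight (T k ω)) (fun i _ => zero_le) hkF
  have hfinal : (n : ℝ≥0∞) ≤ ∑ k ∈ hFfin.toFinset, treeHeight (T k ω) := by
    refine le_trans ?_ (le_trans hht hle)
    exact Nat.cast_le.2 (by omega)
  exact absurd hn (not_lt.2 hfinal)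
end

section
/- In first passage percolation on H where edge weights decrease exponentially with level, ω(e) ~ Exp(2^{h(e)}), almost surely the geodesic tree T(0) rooted at the origin is finite: there exist boundary vertices v_l < 0 < v_r such that the entire rays {v_l + i·θ_r : i ≥ 0} and {v_r + i·θ_l : i ≥ 0} avoid T(0), confining T(0) to a finite triangle. -/
open MeasureTheory ProbabilityTheory

def IsExpRV {Ω : Type*} [MeasurableSpace Ω] (P : Measure Ω) (X : Ω → ℝ) (r : ℝ) : Prop :=
  ∀ t : ℝ, 0 ≤ t → P {ω | t < X ω} = ENNReal.ofReal (Real.exp (-(r * t)))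

/-- The boundary `∂H = {(x,0) : x even}`. -/
def bdH : Set (ℤ × ℤ) := {v | Even v.1 ∧ v.2 = 0}

/-- The directed lattice step: from `u` to `u + θ_l` or `u + θ_r`,
with `θ_l = (-1,1)`, `θ_r = (1,1)`. -/
def latStep (u v : ℤ × ℤ) : Prop := v = u + (-1, 1) ∨ v = u + (1, 1)

/-- The level of an edge `e = (u,w)` : the maximum of the levels of its endpoints. -/
def edgeLevel (e : (ℤ × ℤ) × (ℤ × ℤ)) : ℤ := max e.1.2 e.2.2

/-- A monotone path from the boundary `∂H` to `y`: a nonempty list of vertices starting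
at a boundary vertex, ending at `y`, following directed lattice steps. -/
def IsMonoPath (γ : List (ℤ × ℤ)) (y : ℤ × ℤ) : Prop :=
  γ ≠ [] ∧ (∃ x ∈ bdH, γ.head? = some x) ∧ γ.getLast? = some y ∧ γ.Chain' latStep

/-- The list of (directed) edges of a path. -/
def pathEdges (γ : List (ℤ × ℤ)) : List ((ℤ × ℤ) × (ℤ × ℤ)) := γ.zip γ.tail

/-- The weight `λ(γ) = ∑_{e ∈ γ} ω(e)` of a path under the edge-weight configuration. -/
def pathWeight {Ω : Type*} (w : (ℤ × ℤ) × (ℤ × ℤ) → Ω → ℝ)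
    (γ : List (ℤ × ℤ)) (a : Ω) : ℝ :=
  ((pathEdges γ).map fun e => w e a).sum

/-- The first-passage distance `d_ω(y, ∂H)`: the infimum of weights of monotone paths
from the boundary to `y`. -/
noncomputable def fppDist {Ω : Type*} (w : (ℤ × ℤ) × (ℤ × ℤ) → Ω → ℝ)
    (y : ℤ × ℤ) (a : Ω) : ℝ :=
  sInf {r | ∃ γ, IsMonoPath γ y ∧ pathWeight w γ a = r}

/-- The geodesic tree rooted at the origin: the set of vertices `y` reached by a monotone
path from `(0,0)` whose weight realizes `d_ω(y, ∂H)`. -/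
def geoTree {Ω : Type*} (w : (ℤ × ℤ) × (ℤ × ℤ) → Ω → ℝ) (a : Ω) : Set (ℤ × ℤ) :=
  {y | ∃ γ, IsMonoPath γ y ∧ γ.head? = some ((0 : ℤ), (0 : ℤ)) ∧
    pathWeight w γ a = fppDist w y a}

/-! ### deterministic toolkit -/

lemma latStep_snd {u v : ℤ × ℤ} (h : latStep u v) : v.2 = u.2 + 1 := by
  rcases h with h | h <;> simp [h]

lemma mem_pathEdges_latStep {γ : List (ℤ × ℤ)} (h : γ.Chain' latStep) :
    ∀ e ∈ pathEdges γ, latStep e.1 e.2 := by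
  induction γ with
  | nil => simp [pathEdges]
  | cons x l ih =>
    cases l with
    | nil => simp [pathEdges]
    | cons z t =>
      unfold List.Chain' at h; rw [List.isChain_cons_cons] at h
      intro e he
      have : pathEdges (x :: z :: t) = (x, z) :: pathEdges (z :: t) := rfl
      rw [this] at he
      rcases List.mem_cons.1 he with he' | he'
      · exact he' ▸ h.1
      · exact ih h.2 e he'

lemma pathWeight_nonneg {Ω : Type*} {w : (ℤ × ℤ) × (ℤ × ℤ) → Ω → ℝ} {a : Ω}
    (pos : ∀ e : (ℤ × ℤ) × (ℤ × ℤ), latStep e.1 e.2 → 0 < w e a)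
    {γ : List (ℤ × ℤ)} (h : γ.Chain' latStep) : 0 ≤ pathWeight w γ a := by
  apply List.sum_nonneg
  intro x hx
  simp only [List.mem_map] at hx
  obtain ⟨e, he, rfl⟩ := hx
  exact (pos e (mem_pathEdges_latStep h e he)).le

lemma getLast_snd_of_chain {γ : List (ℤ × ℤ)} (h : γ.Chain' latStep) {x y : ℤ × ℤ}
    (hh : γ.head? = some x) (hl : γ.getLast? = some y) :
    y.2 + 1 = x.2 + γ.length := by
  induction γ generalizing x with
  | nil => simp at hh
  | cons v l ih =>
    cases l with
    | nil =>
      simp only [List.head?_cons, Option.some_inj] at hh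
      simp only [List.getLast?_singleton, Option.some_inj] at hl
      subst hh; subst hl; simp
    | cons z t =>
      unfold List.Chain' at h; rw [List.isChain_cons_cons] at h
      simp only [List.head?_cons, Option.some_inj] at hh
      subst hh
      have hl' : (z :: t).getLast? = some y := by
        rw [← hl]; exact List.getLast?_cons_cons.symm
      have := ih h.2 rfl hl'
      have hz := latStep_snd h.1
      simp only [List.length_cons] at this ⊢
      omega

lemma pathEdges_concat {l : List (ℤ × ℤ)} (h : l ≠ []) (z : ℤ × ℤ) :
    pathEdges (l ++ [z]) = pathEdges l ++ [(l.getLast h, z)] := by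
  induction l with
  | nil => simp at h
  | cons x t ih =>
    cases t with
    | nil => simp [pathEdges]
    | cons u s =>
      have : pathEdges ((x :: u :: s) ++ [z]) = (x, u) :: pathEdges ((u :: s) ++ [z]) := rfl
      rw [this, ih (by simp)]
      rfl

lemma pathWeight_concat {Ω : Type*} (w : (ℤ × ℤ) × (ℤ × ℤ) → Ω → ℝ) (a : Ω)
    {l : List (ℤ × ℤ)} (h : l ≠ []) (z : ℤ × ℤ) :
    pathWeight w (l ++ [z]) a = pathWeight w l a + w (l.getLast h, z) a := by
  rw [pathWeight, pathEdges_concat h z, List.map_append, List.sum_append]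
  simp [pathWeight]

example : True := trivial

/-! ### ray paths -/

def rayPt (v d : ℤ × ℤ) (j : ℕ) : ℤ × ℤ := v + (j : ℤ) • d

lemma rayPt_zero (v d : ℤ × ℤ) : rayPt v d 0 = v := by simp [rayPt]

lemma rayPt_succ (v d : ℤ × ℤ) (j : ℕ) : rayPt v d (j + 1) = rayPt v d j + d := by
  simp only [rayPt]
  push_cast
  rw [add_smul, one_smul, add_assoc]

def rayPath (v d : ℤ × ℤ) (i : ℕ) : List (ℤ × ℤ) :=
  (List.range (i + 1)).map (rayPt v d)

lemma rayPath_ne_nil (v d : ℤ × ℤ) (i : ℕ) : rayPath v d i ≠ [] := by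
  simp [rayPath]

lemma rayPath_head? (v d : ℤ × ℤ) (i : ℕ) : (rayPath v d i).head? = some v := by
  rw [rayPath, List.range_succ_eq_map, List.map_cons, List.head?_cons, rayPt_zero]

lemma rayPath_getLast? (v d : ℤ × ℤ) (i : ℕ) :
    (rayPath v d i).getLast? = some (rayPt v d i) := by
  rw [rayPath, List.range_succ, List.map_append, List.map_singleton, List.getLast?_concat]

lemma latStep_rayPt {d : ℤ × ℤ} (hd : d = (1, 1) ∨ d = (-1, 1)) (v : ℤ × ℤ) (j : ℕ) :
    latStep (rayPt v d j) (rayPt v d (j + 1)) := by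
  rw [rayPt_succ]
  rcases hd with rfl | rfl
  · right; rfl
  · left; rfl

lemma rayPath_chain' (v : ℤ × ℤ) {d : ℤ × ℤ} (hd : d = (1, 1) ∨ d = (-1, 1)) (i : ℕ) :
    (rayPath v d i).Chain' latStep := by
  unfold List.Chain'; rw [rayPath, List.isChain_map, List.isChain_range_succ]
  intro m _
  exact latStep_rayPt hd v m

lemma rayPath_isMonoPath {v : ℤ × ℤ} (hv : v ∈ bdH) {d : ℤ × ℤ}
    (hd : d = (1, 1) ∨ d = (-1, 1)) (i : ℕ) :
    IsMonoPath (rayPath v d i) (rayPt v d i) :=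
  ⟨rayPath_ne_nil v d i, ⟨v, hv, rayPath_head? v d i⟩, rayPath_getLast? v d i,
    rayPath_chain' v hd i⟩

lemma rayPath_weight {Ω : Type*} (w : (ℤ × ℤ) × (ℤ × ℤ) → Ω → ℝ) (a : Ω)
    (v d : ℤ × ℤ) (i : ℕ) :
    pathWeight w (rayPath v d i) a =
      ∑ j ∈ Finset.range i, w (rayPt v d j, rayPt v d (j + 1)) a := by
  induction i with
  | zero => rfl
  | succ k ih =>
    have hsplit : rayPath v d (k + 1) = rayPath v d k ++ [rayPt v d (k + 1)] := by
      rw [rayPath, rayPath, List.range_succ, List.map_append, List.map_singleton]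
    have hlast : (rayPath v d k).getLast (rayPath_ne_nil v d k) = rayPt v d k := by
      have := List.getLast?_eq_getLast_of_ne_nil (rayPath_ne_nil v d k)
      rw [rayPath_getLast? v d k] at this
      exact (Option.some_inj.1 this).symm
    rw [hsplit, pathWeight_concat w a (rayPath_ne_nil v d k), ih, hlast,
      Finset.sum_range_succ]

/-! ### fppDist basics -/

section FPP

variable {Ω : Type*} {w : (ℤ × ℤ) × (ℤ × ℤ) → Ω → ℝ} {a : Ω}
  (pos : ∀ e : (ℤ × ℤ) × (ℤ × ℤ), latStep e.1 e.2 → 0 < w e a)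
include pos

lemma bddBelow_pathWeights (y : ℤ × ℤ) :
    BddBelow {r | ∃ γ, IsMonoPath γ y ∧ pathWeight w γ a = r} := by
  refine ⟨0, fun r hr => ?_⟩
  obtain ⟨γ, hγ, rfl⟩ := hr
  exact pathWeight_nonneg pos hγ.2.2.2

lemma fppDist_le_pathWeight {y : ℤ × ℤ} {γ : List (ℤ × ℤ)} (h : IsMonoPath γ y) :
    fppDist w y a ≤ pathWeight w γ a :=
  csInf_le (bddBelow_pathWeights pos y) ⟨γ, h, rfl⟩

lemma exists_path_lt {y : ℤ × ℤ} {γ₀ : List (ℤ × ℤ)} (h₀ : IsMonoPath γ₀ y) {r : ℝ}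
    (h : fppDist w y a < r) :
    ∃ ρ, IsMonoPath ρ y ∧ pathWeight w ρ a < r := by
  have hne : {s | ∃ γ, IsMonoPath γ y ∧ pathWeight w γ a = s}.Nonempty :=
    ⟨pathWeight w γ₀ a, γ₀, h₀, rfl⟩
  obtain ⟨s, ⟨ρ, hρ, rfl⟩, hs⟩ := (csInf_lt_iff (bddBelow_pathWeights pos y) hne).1 h
  exact ⟨ρ, hρ, hs⟩

/-- parent of a non-root vertex of the geodesic tree is in the geodesic tree -/
lemma geoTree_parent {y : ℤ × ℤ} (hy : y ∈ geoTree w a) (hlev : 0 < y.2) :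
    ∃ u, latStep u y ∧ u ∈ geoTree w a := by
  obtain ⟨γ, hmono, hhead, hwt⟩ := hy
  obtain ⟨hne, ⟨x, hx, hh⟩, hl, hch⟩ := hmono
  have hlen : y.2 + 1 = (0 : ℤ) + γ.length := by
    have := getLast_snd_of_chain hch hhead hl
    simpa using this
  have hlen2 : 2 ≤ γ.length := by omega
  set δ := γ.dropLast with hδdef
  have hδne : δ ≠ [] := by
    have : δ.length = γ.length - 1 := List.length_dropLast
    intro hc
    rw [hc] at this
    simp at this
    omega
  have hglast : γ.getLast hne = y := by
    have := List.getLast?_eq_getLast_of_ne_nil hne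
    rw [hl] at this
    exact (Option.some_inj.1 this).symm
  have hsplit : γ = δ ++ [y] := by
    rw [hδdef, ← hglast]
    exact (List.dropLast_append_getLast hne).symm
  set u := δ.getLast hδne with hudef
  have hδlast : δ.getLast? = some u := List.getLast?_eq_getLast_of_ne_nil hδne
  rw [hsplit] at hch
  unfold List.Chain' at hch; rw [List.isChain_append] at hch
  obtain ⟨hchδ, -, hconn⟩ := hch
  have hstep : latStep u y := hconn u hδlast y rfl
  have hδhead : δ.head? = some ((0 : ℤ), (0 : ℤ)) := by
    rw [hsplit, List.head?_append_of_ne_nil _ hδne] at hhead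
    exact hhead
  have hδmono : IsMonoPath δ u :=
    ⟨hδne, ⟨((0 : ℤ), (0 : ℤ)), ⟨Even.zero, rfl⟩, hδhead⟩, hδlast, hchδ⟩
  have hwsplit : pathWeight w γ a = pathWeight w δ a + w (u, y) a := by
    rw [hsplit]
    exact pathWeight_concat w a hδne y
  refine ⟨u, hstep, δ, hδmono, hδhead, ?_⟩
  by_contra hne'
  have hlt : fppDist w u a < pathWeight w δ a :=
    lt_of_le_of_ne (fppDist_le_pathWeight pos hδmono) (Ne.symm hne')
  obtain ⟨ρ, hρ, hρlt⟩ := exists_path_lt pos hδmono hlt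
  have hρne : ρ ≠ [] := hρ.1
  have hρlast : ρ.getLast hρne = u := by
    have := List.getLast?_eq_getLast_of_ne_nil hρne
    rw [hρ.2.2.1] at this
    exact (Option.some_inj.1 this).symm
  have hσmono : IsMonoPath (ρ ++ [y]) y := by
    refine ⟨by simp, ?_, List.getLast?_concat, ?_⟩
    · obtain ⟨x', hx', hh'⟩ := hρ.2.1
      exact ⟨x', hx', by rw [List.head?_append_of_ne_nil _ hρne]; exact hh'⟩
    · unfold List.Chain'; rw [List.isChain_append]
      refine ⟨hρ.2.2.2, List.isChain_singleton y, fun p hp q hq => ?_⟩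
      rw [hρ.2.2.1] at hp
      simp only [Option.mem_def, Option.some_inj] at hp
      simp only [List.head?_cons, Option.mem_def, Option.some_inj] at hq
      rw [← hp, ← hq]
      exact hstep
  have : fppDist w y a ≤ pathWeight w (ρ ++ [y]) a := fppDist_le_pathWeight pos hσmono
  rw [pathWeight_concat w a hρne y, hρlast] at this
  have hcon : fppDist w y a < pathWeight w γ a := by
    rw [hwsplit]
    linarith
  rw [hwt] at hcon
  exact lt_irrefl _ hcon

end FPP

section Avoid

variable {Ω : Type*} {w : (ℤ × ℤ) × (ℤ × ℤ) → Ω → ℝ} {a : Ω}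

lemma rayPt_snd {v d : ℤ × ℤ} (hd : d = (1, 1) ∨ d = (-1, 1)) (hv2 : v.2 = 0) (i : ℕ) :
    (rayPt v d i).2 = (i : ℤ) := by
  rcases hd with rfl | rfl <;> simp [rayPt, hv2]

lemma geoTree_level {y : ℤ × ℤ} (hy : y ∈ geoTree w a) :
    0 ≤ y.2 ∧ (y.2 = 0 → y = ((0 : ℤ), (0 : ℤ))) := by
  obtain ⟨γ, ⟨hne, ⟨x, hx, hh⟩, hl, hch⟩, hhead, -⟩ := hy
  have hlen : y.2 + 1 = (0 : ℤ) + γ.length := by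
    simpa using getLast_snd_of_chain hch hhead hl
  have hlpos : 1 ≤ γ.length := List.length_pos_iff.2 hne
  constructor
  · omega
  · intro h0
    have h1 : γ.length = 1 := by omega
    obtain ⟨c, rfl⟩ := List.length_eq_one_iff.1 h1
    simp only [List.head?_cons, Option.some_inj] at hhead
    simp only [List.getLast?_singleton, Option.some_inj] at hl
    rw [← hl, hhead]

lemma pathWeight_cons_cons (x z : ℤ × ℤ) (t : List (ℤ × ℤ)) :
    pathWeight w (x :: z :: t) a = w (x, z) a + pathWeight w (z :: t) a := rfl

variable (pos : ∀ e : (ℤ × ℤ) × (ℤ × ℤ), latStep e.1 e.2 → 0 < w e a)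
include pos

lemma ray_avoid {v : ℤ × ℤ} (hv : v ∈ bdH) (hv0 : v ≠ ((0 : ℤ), (0 : ℤ))) {d : ℤ × ℤ}
    (hd : d = (1, 1) ∨ d = (-1, 1))
    (hsum : ∀ i : ℕ, ∑ j ∈ Finset.range i, w (rayPt v d j, rayPt v d (j + 1)) a <
      min (w (((0 : ℤ), (0 : ℤ)), ((1 : ℤ), (1 : ℤ))) a)
        (w (((0 : ℤ), (0 : ℤ)), ((-1 : ℤ), (1 : ℤ))) a)) :
    ∀ i : ℕ, rayPt v d i ∉ geoTree w a := by
  intro i hy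
  set y := rayPt v d i with hydef
  set M := min (w (((0 : ℤ), (0 : ℤ)), ((1 : ℤ), (1 : ℤ))) a)
    (w (((0 : ℤ), (0 : ℤ)), ((-1 : ℤ), (1 : ℤ))) a) with hMdef
  have hy2 : y.2 = (i : ℤ) := rayPt_snd hd hv.2 i
  rcases Nat.eq_zero_or_pos i with rfl | hi
  · have : y = ((0 : ℤ), (0 : ℤ)) := (geoTree_level hy).2 (by simpa using hy2)
    apply hv0
    rw [← rayPt_zero v d, ← hydef, this]
  · -- weight of any geodesic from the origin is at least M
    obtain ⟨γ, hmono, hhead, hwt⟩ := hy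
    obtain ⟨hne, -, hl, hch⟩ := hmono
    have hlen : y.2 + 1 = (0 : ℤ) + γ.length := by
      simpa using getLast_snd_of_chain hch hhead hl
    have hlen2 : 2 ≤ γ.length := by omega
    obtain ⟨x, l, rfl⟩ : ∃ x l, γ = x :: l := by
      cases γ with
      | nil => simp at hne
      | cons x l => exact ⟨x, l, rfl⟩
    obtain ⟨z, t, rfl⟩ : ∃ z t, l = z :: t := by
      cases l with
      | nil => simp at hlen2
      | cons z t => exact ⟨z, t, rfl⟩
    simp only [List.head?_cons, Option.some_inj] at hhead
    subst hhead
    unfold List.Chain' at hch; rw [List.isChain_cons_cons] at hch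
    have hz : w (((0 : ℤ), (0 : ℤ)), z) a ≥ M := by
      rcases hch.1 with h | h
      · rw [h]
        have : ((0 : ℤ), (0 : ℤ)) + (-1, 1) = ((-1 : ℤ), (1 : ℤ)) := by decide
        rw [this]
        exact min_le_right _ _
      · rw [h]
        have : ((0 : ℤ), (0 : ℤ)) + (1, 1) = ((1 : ℤ), (1 : ℤ)) := by decide
        rw [this]
        exact min_le_left _ _
    have hwγ : M ≤ pathWeight w (((0 : ℤ), (0 : ℤ)) :: z :: t) a := by
      rw [pathWeight_cons_cons]
      have := pathWeight_nonneg pos hch.2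
      linarith
    have hcheap : fppDist w y a ≤ pathWeight w (rayPath v d i) a :=
      fppDist_le_pathWeight pos (by rw [hydef]; exact rayPath_isMonoPath hv hd i)
    rw [rayPath_weight] at hcheap
    have := hsum i
    rw [hwt] at hwγ
    linarith

lemma geoTree_confined (nl nr : ℤ) (hnl : 0 < nl) (hnr : 0 < nr)
    (hL : ∀ i : ℕ, rayPt (-2 * nl, 0) (1, 1) i ∉ geoTree w a)
    (hR : ∀ i : ℕ, rayPt (2 * nr, 0) (-1, 1) i ∉ geoTree w a) :
    ∀ y ∈ geoTree w a, 0 ≤ y.2 ∧ -2 * nl + y.2 < y.1 ∧ y.1 < 2 * nr - y.2 := by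
  have key : ∀ k : ℕ, ∀ y ∈ geoTree w a, y.2 = (k : ℤ) →
      Even (y.1 + y.2) ∧ -2 * nl + y.2 < y.1 ∧ y.1 < 2 * nr - y.2 := by
    intro k
    induction k with
    | zero =>
      intro y hy hk
      have h0 : y = ((0 : ℤ), (0 : ℤ)) := (geoTree_level hy).2 (by exact_mod_cast hk)
      subst h0
      refine ⟨by simp, by simpa using by omega, by simpa using by omega⟩
    | succ k ih =>
      intro y hy hk
      push_cast at hk
      have hypos : 0 < y.2 := by omega
      obtain ⟨u, hstep, hu⟩ := geoTree_parent pos hy hypos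
      have husnd : y.2 = u.2 + 1 := latStep_snd hstep
      obtain ⟨hev, hl1, hr1⟩ := ih u hu (by push_cast; omega)
      have hy1 : y.1 = u.1 - 1 ∨ y.1 = u.1 + 1 := by
        rcases hstep with h | h
        · left; rw [h]; simp; omega
        · right; rw [h]; simp
      have hevi := Int.even_iff.1 hev
      have hyev : Even (y.1 + y.2) := by
        rw [Int.even_iff]
        rcases hy1 with h | h <;> omega
      have hyevi := Int.even_iff.1 hyev
      have hneL : y.1 ≠ -2 * nl + y.2 := by
        intro hcon
        apply hL y.2.toNat
        have hpt : rayPt (-2 * nl, 0) (1, 1) y.2.toNat = y := by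
          have h2 : (y.2.toNat : ℤ) = y.2 := Int.toNat_of_nonneg (by omega)
          simp only [rayPt, Prod.mk.injEq, Prod.fst_add, Prod.snd_add, smul_eq_mul,
            Prod.smul_mk, Prod.ext_iff]
          constructor <;> simp [h2] <;> omega
        rw [hpt]
        exact hy
      have hneR : y.1 ≠ 2 * nr - y.2 := by
        intro hcon
        apply hR y.2.toNat
        have hpt : rayPt (2 * nr, 0) (-1, 1) y.2.toNat = y := by
          have h2 : (y.2.toNat : ℤ) = y.2 := Int.toNat_of_nonneg (by omega)
          simp only [rayPt, Prod.mk.injEq, Prod.fst_add, Prod.snd_add, smul_eq_mul,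
            Prod.smul_mk, Prod.ext_iff]
          constructor <;> simp [h2] <;> omega
        rw [hpt]
        exact hy
      refine ⟨hyev, ?_, ?_⟩ <;> rcases hy1 with h | h <;> omega
  intro y hy
  have h0 := (geoTree_level hy).1
  obtain ⟨-, h1, h2⟩ := key y.2.toNat y hy (Int.toNat_of_nonneg h0).symm
  exact ⟨h0, h1, h2⟩

lemma geoTree_finite_of_rays (nl nr : ℤ) (hnl : 0 < nl) (hnr : 0 < nr)
    (hL : ∀ i : ℕ, rayPt (-2 * nl, 0) (1, 1) i ∉ geoTree w a)
    (hR : ∀ i : ℕ, rayPt (2 * nr, 0) (-1, 1) i ∉ geoTree w a) :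
    (geoTree w a).Finite := by
  have hsub : geoTree w a ⊆ (Set.Icc (-2 * nl) (2 * nr)) ×ˢ (Set.Icc 0 (nl + nr)) := by
    intro y hy
    obtain ⟨h0, h1, h2⟩ := geoTree_confined pos nl nr hnl hnr hL hR y hy
    refine ⟨?_, ?_⟩ <;> simp only [Set.mem_Icc] <;> omega
  exact Set.Finite.subset ((Set.finite_Icc _ _).prod (Set.finite_Icc _ _)) hsub

end Avoid

/-! ### probabilistic core -/

open Filter in
lemma prod_one_sub_ge (f : ℕ → ℝ) (h0 : ∀ j, 0 ≤ f j) (h1 : ∀ j, f j ≤ 1) (A B : ℕ) :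
    1 - ∑ j ∈ Finset.Ico A B, f j ≤ ∏ j ∈ Finset.Ico A B, (1 - f j) := by
  induction B with
  | zero => simp
  | succ B ih =>
    rcases le_or_gt A B with hAB | hAB
    · rw [Finset.sum_Ico_succ_top hAB, Finset.prod_Ico_succ_top hAB]
      have hsum0 : 0 ≤ ∑ j ∈ Finset.Ico A B, f j :=
        Finset.sum_nonneg fun j _ => h0 j
      have := mul_le_mul_of_nonneg_right ih (by linarith [h1 B] : (0:ℝ) ≤ 1 - f B)
      nlinarith [h0 B]
    · rw [Finset.Ico_eq_empty (by omega)]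
      simp

open Filter Topology ENNReal in
theorem core_ray_lemma {Ω : Type*} [MeasurableSpace Ω] (P : Measure Ω)
    [IsProbabilityMeasure P] (w : (ℤ × ℤ) × (ℤ × ℤ) → Ω → ℝ)
    (hmeas : ∀ e, Measurable (w e))
    (hind : iIndepFun w P)
    (E : ℕ → ℕ → (ℤ × ℤ) × (ℤ × ℤ))
    (hinj : Function.Injective (fun p : ℕ × ℕ => E p.1 p.2))
    (hlat : ∀ n j, latStep (E n j).1 (E n j).2)
    (hlvl : ∀ n j, edgeLevel (E n j) = (j : ℤ) + 1)
    (hexp : ∀ e, latStep e.1 e.2 → IsExpRV P (w e) ((2 : ℝ) ^ (edgeLevel e))) :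
    ∀ᵐ a ∂P, ∀ q : ℚ, 0 < q → ∃ n : ℕ, ∀ j : ℕ,
      w (E n j) a < (q : ℝ) * (3 / 4) ^ j / 4 := by
  rw [ae_all_iff]
  intro q
  by_cases hq : 0 < q
  swap
  · exact ae_of_all _ fun a h => absurd h hq
  have hq' : (0 : ℝ) < (q : ℝ) := by exact_mod_cast hq
  set t : ℕ → ℝ := fun j => (q : ℝ) * (3 / 4) ^ j / 4 with ht
  have htpos : ∀ j, 0 < t j := fun j => by positivity
  set C : ℕ → ℕ → Set Ω := fun n j => w (E n j) ⁻¹' Set.Iio (t j) with hC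
  set B : ℕ → Set Ω := fun n => ⋂ j, C n j with hB
  have hCmeas : ∀ n j, MeasurableSet (C n j) := fun n j => (hmeas _) measurableSet_Iio
  have hBmeas : ∀ n, MeasurableSet (B n) := fun n => MeasurableSet.iInter fun j => hCmeas n j
  -- exponent arithmetic
  set aj : ℕ → ℝ := fun j => Real.exp (-((q : ℝ) * (3 / 2) ^ j / 4)) with haj
  have hexpo : ∀ j : ℕ, (2 : ℝ) ^ (j + 1) * (t j / 2) = (q : ℝ) * (3 / 2) ^ j / 4 := by
    intro j
    have h23 : (2 : ℝ) ^ j * (3 / 4) ^ j = (3 / 2) ^ j := by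
      rw [← mul_pow]; norm_num
    rw [ht]
    simp only []
    rw [pow_succ]
    nlinarith [h23]
  -- tail probabilities
  have hrate : ∀ n j, P {a | t j / 2 < w (E n j) a} = ENNReal.ofReal (aj j) := by
    intro n j
    have h := hexp (E n j) (hlat n j) (t j / 2) (half_pos (htpos j)).le
    rw [hlvl n j] at h
    rw [show ((j : ℤ) + 1) = ((j + 1 : ℕ) : ℤ) by push_cast; ring, zpow_natCast] at h
    rw [h, haj, hexpo j]
  have haj0 : ∀ j, 0 < aj j := fun j => Real.exp_pos _
  have haj1 : ∀ j, aj j < 1 := fun j => by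
    rw [haj, Real.exp_lt_one_iff]
    have : (0:ℝ) < (q : ℝ) * (3 / 2) ^ j / 4 := by positivity
    linarith
  -- lower bound for the basic events
  have hClb : ∀ n j, ENNReal.ofReal (1 - aj j) ≤ P (C n j) := by
    intro n j
    have hsub : {a | t j / 2 < w (E n j) a}ᶜ ⊆ C n j := by
      intro x hx
      simp only [Set.mem_compl_iff, Set.mem_setOf_eq, not_lt] at hx
      have := htpos j
      simp only [hC, Set.mem_preimage, Set.mem_Iio]
      linarith
    have hms : MeasurableSet {a | t j / 2 < w (E n j) a} := by
      have : {a | t j / 2 < w (E n j) a} = w (E n j) ⁻¹' Set.Ioi (t j / 2) := rfl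
      rw [this]
      exact (hmeas _) measurableSet_Ioi
    calc ENNReal.ofReal (1 - aj j) = 1 - ENNReal.ofReal (aj j) := by
          rw [ENNReal.ofReal_sub _ (haj0 j).le, ENNReal.ofReal_one]
      _ = P {a | t j / 2 < w (E n j) a}ᶜ := by
          rw [prob_compl_eq_one_sub hms, hrate n j]
      _ ≤ P (C n j) := measure_mono hsub
  -- finite products multiply
  classical
  have hkey : ∀ (S : Finset ℕ) (m : ℕ),
      P (⋂ n ∈ S, ⋂ j ∈ Finset.range m, C n j) =
        ∏ n ∈ S, ∏ j ∈ Finset.range m, P (C n j) := by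
    intro S m
    set g : ℕ × ℕ → (ℤ × ℤ) × (ℤ × ℤ) := fun p => E p.1 p.2 with hg
    set τ : (ℤ × ℤ) × (ℤ × ℤ) → ℝ := fun e => t ((Function.invFun g e).2) with hτ
    have hτg : ∀ p : ℕ × ℕ, τ (g p) = t p.2 := fun p => by
      rw [hτ]
      simp only []
      rw [Function.leftInverse_invFun hinj p]
    set s : (ℤ × ℤ) × (ℤ × ℤ) → Set Ω := fun e => w e ⁻¹' Set.Iio (τ e) with hs
    have hsg : ∀ p : ℕ × ℕ, s (g p) = C p.1 p.2 := fun p => by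
      rw [hs]; simp only []; rw [hτg p]
    have h1 : P (⋂ e ∈ (S ×ˢ Finset.range m).image g, s e)
        = ∏ e ∈ (S ×ˢ Finset.range m).image g, P (s e) :=
      hind.meas_biInter (fun e _ => ⟨Set.Iio (τ e), measurableSet_Iio, rfl⟩)
    have hset : (⋂ e ∈ (S ×ˢ Finset.range m).image g, s e)
        = ⋂ n ∈ S, ⋂ j ∈ Finset.range m, C n j := by
      ext x
      simp only [Set.mem_iInter, Finset.mem_image, Finset.mem_product, Finset.mem_range]
      constructor
      · intro h n hn j hj
        have := h (g (n, j)) ⟨(n, j), ⟨hn, hj⟩, rfl⟩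
        rwa [hsg (n, j)] at this
      · rintro h e ⟨⟨n, j⟩, ⟨hn, hj⟩, rfl⟩
        rw [hsg (n, j)]
        exact h n hn j hj
    have hprodim : ∏ e ∈ (S ×ˢ Finset.range m).image g, P (s e)
        = ∏ n ∈ S, ∏ j ∈ Finset.range m, P (C n j) := by
      rw [Finset.prod_image (fun p _ p' _ h => hinj h)]
      rw [← Finset.prod_product']
      exact Finset.prod_congr rfl fun p _ => by rw [hsg p]
    rw [hset, hprodim] at h1
    exact h1
  have hTn : ∀ n m, P (⋂ j ∈ Finset.range m, C n j) = ∏ j ∈ Finset.range m, P (C n j) := by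
    intro n m
    have := hkey {n} m
    simpa using this
  -- continuity from above
  have hTanti : ∀ S : Finset ℕ, Antitone (fun m => ⋂ n ∈ S, ⋂ j ∈ Finset.range m, C n j) := by
    intro S m m' hmm' x hx
    simp only [Set.mem_iInter, Finset.mem_range] at hx ⊢
    intro n hn j hj
    exact hx n hn j (lt_of_lt_of_le hj hmm')
  have hIeq : ∀ S : Finset ℕ,
      (⋂ m, ⋂ n ∈ S, ⋂ j ∈ Finset.range m, C n j) = ⋂ n ∈ S, B n := by
    intro S
    ext x
    simp only [Set.mem_iInter, Finset.mem_range, hB]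
    constructor
    · intro h n hn j
      exact h (j + 1) n hn j (Nat.lt_succ_self j)
    · intro h m n hn j hj
      exact h n hn j
  have hlimS : ∀ S : Finset ℕ,
      Tendsto (fun m => P (⋂ n ∈ S, ⋂ j ∈ Finset.range m, C n j)) atTop
        (𝓝 (P (⋂ n ∈ S, B n))) := by
    intro S
    have h := tendsto_measure_iInter_atTop (μ := P)
      (s := fun m => ⋂ n ∈ S, ⋂ j ∈ Finset.range m, C n j)
      (fun m => (S.measurableSet_biInter fun n _ =>
        (Finset.range m).measurableSet_biInter fun j _ => hCmeas n j).nullMeasurableSet)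
      (hTanti S) ⟨0, measure_ne_top P _⟩
    rwa [hIeq S] at h
  have hlimn : ∀ n, Tendsto (fun m => P (⋂ j ∈ Finset.range m, C n j)) atTop
      (𝓝 (P (B n))) := by
    intro n
    have := hlimS {n}
    simpa using this
  -- independence of the B n
  have hlimprod : ∀ S : Finset ℕ,
      Tendsto (fun m => ∏ n ∈ S, P (⋂ j ∈ Finset.range m, C n j)) atTop
        (𝓝 (∏ n ∈ S, P (B n))) := by
    intro S
    induction S using Finset.induction with
    | empty => simpa using tendsto_const_nhds
    | insert _ _ hnotmem ih =>
      rename_i n S'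
      simp only [Finset.prod_insert hnotmem]
      refine ENNReal.Tendsto.mul (hlimn n) (Or.inr ?_) ih (Or.inr (measure_ne_top P _))
      exact ENNReal.prod_ne_top fun n' _ => measure_ne_top P _
  have hBprod : ∀ S : Finset ℕ, P (⋂ n ∈ S, B n) = ∏ n ∈ S, P (B n) := by
    intro S
    refine tendsto_nhds_unique (hlimS S) ?_
    have : (fun m => P (⋂ n ∈ S, ⋂ j ∈ Finset.range m, C n j))
        = fun m => ∏ n ∈ S, P (⋂ j ∈ Finset.range m, C n j) := by
      funext m
      rw [hkey S m]
      exact Finset.prod_congr rfl fun n _ => (hTn n m).symm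
    rw [this]
    exact hlimprod S
  have hiid : iIndepSet B P := (iIndepSet_iff_meas_biInter hBmeas).2 hBprod
  -- uniform lower bound on P (B n)
  have hajle : ∀ j : ℕ, aj j ≤ 4 / (q : ℝ) * (2 / 3) ^ j := by
    intro j
    have hs : (0 : ℝ) < (q : ℝ) * (3 / 2) ^ j / 4 := by positivity
    have h1 : (q : ℝ) * (3 / 2) ^ j / 4 ≤ Real.exp ((q : ℝ) * (3 / 2) ^ j / 4) := by
      have := Real.add_one_le_exp ((q : ℝ) * (3 / 2) ^ j / 4)
      linarith
    have hrfl : aj j = Real.exp (-((q : ℝ) * (3 / 2) ^ j / 4)) := rfl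
    rw [hrfl, Real.exp_neg]
    have h2 : (Real.exp ((q : ℝ) * (3 / 2) ^ j / 4))⁻¹ ≤ ((q : ℝ) * (3 / 2) ^ j / 4)⁻¹ :=
      inv_anti₀ hs h1
    have h3 : ((q : ℝ) * (3 / 2) ^ j / 4)⁻¹ = 4 / (q : ℝ) * (2 / 3) ^ j := by
      have hpne : ((3 : ℝ) / 2) ^ j ≠ 0 := by positivity
      rw [show ((2 : ℝ) / 3) ^ j = (((3 : ℝ) / 2) ^ j)⁻¹ by rw [← inv_pow]; norm_num]
      field_simp
    rw [h3] at h2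
    exact h2
  obtain ⟨J, hJ⟩ : ∃ J : ℕ, ((2 : ℝ) / 3) ^ J < (q : ℝ) / 24 :=
    exists_pow_lt_of_lt_one (by positivity) (by norm_num)
  have htail : ∀ m : ℕ, ∑ j ∈ Finset.Ico J m, aj j ≤ 1 / 2 := by
    intro m
    rcases le_or_gt J m with hJm | hJm
    · have h1 : ∑ j ∈ Finset.Ico J m, aj j ≤ ∑ j ∈ Finset.Ico J m, 4 / (q : ℝ) * (2 / 3) ^ j :=
        Finset.sum_le_sum fun j _ => hajle j
      have h2 : ∑ j ∈ Finset.Ico J m, ((2 : ℝ) / 3) ^ j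
          = (((2 : ℝ) / 3) ^ m - (2 / 3) ^ J) / ((2 : ℝ) / 3 - 1) := geom_sum_Ico (by norm_num) hJm
      have h3 : ∑ j ∈ Finset.Ico J m, ((2 : ℝ) / 3) ^ j ≤ 3 * (2 / 3) ^ J := by
        rw [h2]
        have hm : (0 : ℝ) ≤ ((2 : ℝ) / 3) ^ m := by positivity
        have heq : (((2 : ℝ) / 3) ^ m - (2 / 3) ^ J) / ((2 : ℝ) / 3 - 1)
            = 3 * (((2 : ℝ) / 3) ^ J - (2 / 3) ^ m) := by ring
        rw [heq]
        linarith
      calc ∑ j ∈ Finset.Ico J m, aj j ≤ ∑ j ∈ Finset.Ico J m, 4 / (q : ℝ) * (2 / 3) ^ j := h1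
        _ = 4 / (q : ℝ) * ∑ j ∈ Finset.Ico J m, ((2 : ℝ) / 3) ^ j := by
            rw [Finset.mul_sum]
        _ ≤ 4 / (q : ℝ) * (3 * (2 / 3) ^ J) := by
            apply mul_le_mul_of_nonneg_left h3 (by positivity)
        _ ≤ 4 / (q : ℝ) * (3 * ((q : ℝ) / 24)) := by
            apply mul_le_mul_of_nonneg_left _ (by positivity)
            apply mul_le_mul_of_nonneg_left hJ.le (by norm_num)
        _ = 1 / 2 := by field_simp; ring
    · rw [Finset.Ico_eq_empty (by omega)]
      norm_num
  set c : ℝ := (∏ j ∈ Finset.range J, (1 - aj j)) * (1 / 2) with hc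
  have hfacpos : ∀ j : ℕ, (0 : ℝ) < 1 - aj j := fun j => by linarith [haj1 j]
  have hc0 : 0 < c := by
    rw [hc]
    exact mul_pos (Finset.prod_pos fun j _ => hfacpos j) (by norm_num)
  have hprod_lb : ∀ m : ℕ, c ≤ ∏ j ∈ Finset.range m, (1 - aj j) := by
    intro m
    rcases le_or_gt m J with hmJ | hmJ
    · have hsplit : (∏ j ∈ Finset.range m, (1 - aj j)) * ∏ j ∈ Finset.Ico m J, (1 - aj j)
          = ∏ j ∈ Finset.range J, (1 - aj j) := Finset.prod_range_mul_prod_Ico _ hmJ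
      have h1 : ∏ j ∈ Finset.Ico m J, (1 - aj j) ≤ 1 :=
        Finset.prod_le_one (fun j _ => (hfacpos j).le) (fun j _ => by linarith [haj0 j])
      have h2 : (0:ℝ) < ∏ j ∈ Finset.range m, (1 - aj j) :=
        Finset.prod_pos fun j _ => hfacpos j
      rw [hc]
      rw [← hsplit]
      nlinarith
    · have hsplit : (∏ j ∈ Finset.range J, (1 - aj j)) * ∏ j ∈ Finset.Ico J m, (1 - aj j)
          = ∏ j ∈ Finset.range m, (1 - aj j) := Finset.prod_range_mul_prod_Ico _ hmJ.le
      have h1 : (1 : ℝ) / 2 ≤ ∏ j ∈ Finset.Ico J m, (1 - aj j) := by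
        have := prod_one_sub_ge aj (fun j => (haj0 j).le) (fun j => (haj1 j).le) J m
        have := htail m
        linarith
      have h2 : (0:ℝ) < ∏ j ∈ Finset.range J, (1 - aj j) :=
        Finset.prod_pos fun j _ => hfacpos j
      rw [hc, ← hsplit]
      nlinarith
  have hBlb : ∀ n, ENNReal.ofReal c ≤ P (B n) := by
    intro n
    refine ge_of_tendsto (hlimn n) (Eventually.of_forall fun m => ?_)
    rw [hTn n m]
    calc ENNReal.ofReal c ≤ ENNReal.ofReal (∏ j ∈ Finset.range m, (1 - aj j)) :=
          ENNReal.ofReal_le_ofReal (hprod_lb m)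
      _ = ∏ j ∈ Finset.range m, ENNReal.ofReal (1 - aj j) :=
          ENNReal.ofReal_prod_of_nonneg fun j _ => (hfacpos j).le
      _ ≤ ∏ j ∈ Finset.range m, P (C n j) :=
          Finset.prod_le_prod' fun j _ => hClb n j
  have htsum : ∑' n : ℕ, P (B n) = ∞ := by
    have h1 : ∑' n : ℕ, (ENNReal.ofReal c) ≤ ∑' n : ℕ, P (B n) :=
      ENNReal.tsum_le_tsum hBlb
    rw [ENNReal.tsum_const_eq_top_of_ne_zero
      ((ENNReal.ofReal_pos.2 hc0).ne')] at h1
    exact top_le_iff.1 h1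
  have hone := measure_limsup_eq_one hBmeas hiid htsum
  have hae : ∀ᵐ a ∂P, a ∈ limsup B atTop := by
    have hms : MeasurableSet (limsup B atTop) := MeasurableSet.measurableSet_limsup hBmeas
    have := (prob_compl_eq_zero_iff hms).2 hone
    rw [ae_iff]
    convert this using 2
    rfl
  filter_upwards [hae] with a ha _
  rw [mem_limsup_iff_frequently_mem] at ha
  obtain ⟨n, hn⟩ := ha.exists
  refine ⟨n, fun j => ?_⟩
  have := Set.mem_iInter.1 hn j
  simpa [hC] using this

lemma ae_pos_weights {Ω : Type*} [MeasurableSpace Ω] (P : Measure Ω)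
    [IsProbabilityMeasure P] (w : (ℤ × ℤ) × (ℤ × ℤ) → Ω → ℝ)
    (hmeas : ∀ e, Measurable (w e))
    (hexp : ∀ e, latStep e.1 e.2 → IsExpRV P (w e) ((2 : ℝ) ^ (edgeLevel e))) :
    ∀ᵐ a ∂P, ∀ e : (ℤ × ℤ) × (ℤ × ℤ), latStep e.1 e.2 → 0 < w e a := by
  rw [ae_all_iff]
  intro e
  by_cases hl : latStep e.1 e.2
  · have h := hexp e hl 0 le_rfl
    simp only [mul_zero, neg_zero, Real.exp_zero, ENNReal.ofReal_one] at h
    have hms : MeasurableSet {a | (0:ℝ) < w e a} := (hmeas e) measurableSet_Ioi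
    have hc : P {a | (0:ℝ) < w e a}ᶜ = 0 := by
      rw [prob_compl_eq_one_sub hms, h]
      simp
    rw [ae_iff]
    refine measure_mono_null ?_ hc
    intro a ha
    simp only [Set.mem_setOf_eq, Classical.not_imp] at ha
    simp only [Set.mem_compl_iff, Set.mem_setOf_eq]
    exact fun hcon => (not_lt.2 (le_of_lt hcon)).elim (absurd hcon (by exact fun _ => ha.2 hcon))
  · exact ae_of_all _ fun a h => absurd h hl

/-! ### the ray edge families -/

def ELedge (n j : ℕ) : (ℤ × ℤ) × (ℤ × ℤ) :=
  (rayPt (-2 * ((n : ℤ) + 1), 0) (1, 1) j, rayPt (-2 * ((n : ℤ) + 1), 0) (1, 1) (j + 1))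

def ERedge (n j : ℕ) : (ℤ × ℤ) × (ℤ × ℤ) :=
  (rayPt (2 * ((n : ℤ) + 1), 0) (-1, 1) j, rayPt (2 * ((n : ℤ) + 1), 0) (-1, 1) (j + 1))

lemma rayPt_coords (v : ℤ × ℤ) (c : ℤ) (j : ℕ) :
    rayPt v (c, 1) j = (v.1 + j * c, v.2 + j) := by
  simp [rayPt, Prod.ext_iff, mul_comm]

lemma ELedge_inj : Function.Injective (fun p : ℕ × ℕ => ELedge p.1 p.2) := by
  rintro ⟨n, j⟩ ⟨n', j'⟩ h
  simp only [ELedge, rayPt_coords, Prod.mk.injEq] at h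
  obtain ⟨⟨h1, h2⟩, -⟩ := h
  simp only [Prod.mk.injEq]
  omega

lemma ERedge_inj : Function.Injective (fun p : ℕ × ℕ => ERedge p.1 p.2) := by
  rintro ⟨n, j⟩ ⟨n', j'⟩ h
  simp only [ERedge, rayPt_coords, Prod.mk.injEq] at h
  obtain ⟨⟨h1, h2⟩, -⟩ := h
  simp only [Prod.mk.injEq]
  omega

lemma ELedge_lat (n j : ℕ) : latStep (ELedge n j).1 (ELedge n j).2 :=
  latStep_rayPt (Or.inl rfl) _ j

lemma ERedge_lat (n j : ℕ) : latStep (ERedge n j).1 (ERedge n j).2 :=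
  latStep_rayPt (Or.inr rfl) _ j

lemma ELedge_lvl (n j : ℕ) : edgeLevel (ELedge n j) = (j : ℤ) + 1 := by
  simp only [ELedge, edgeLevel, rayPt_coords]
  simp
  

lemma ERedge_lvl (n j : ℕ) : edgeLevel (ERedge n j) = (j : ℤ) + 1 := by
  simp only [ERedge, edgeLevel, rayPt_coords]
  simp
  

theorem geoTree_finite_decreasing' {Ω : Type*} [MeasurableSpace Ω] (P : Measure Ω)
    [IsProbabilityMeasure P] (w : (ℤ × ℤ) × (ℤ × ℤ) → Ω → ℝ)
    (hmeas : ∀ e, Measurable (w e))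
    (hind : iIndepFun w P)
    (hexp : ∀ e, latStep e.1 e.2 → IsExpRV P (w e) ((2 : ℝ) ^ (edgeLevel e))) :
    ∀ᵐ a ∂P, ∃ vl vr : ℤ × ℤ, vl ∈ bdH ∧ vr ∈ bdH ∧ vl.1 < 0 ∧ 0 < vr.1 ∧
      (∀ i : ℕ, vl + (i : ℤ) • ((1, 1) : ℤ × ℤ) ∉ geoTree w a) ∧
      (∀ i : ℕ, vr + (i : ℤ) • ((-1, 1) : ℤ × ℤ) ∉ geoTree w a) ∧
      (geoTree w a).Finite := by
  have hposAS := ae_pos_weights P w hmeas hexp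
  have hLcore := core_ray_lemma P w hmeas hind ELedge ELedge_inj ELedge_lat ELedge_lvl hexp
  have hRcore := core_ray_lemma P w hmeas hind ERedge ERedge_inj ERedge_lat ERedge_lvl hexp
  filter_upwards [hposAS, hLcore, hRcore] with a hpos hLa hRa
  set M := min (w (((0 : ℤ), (0 : ℤ)), ((1 : ℤ), (1 : ℤ))) a)
    (w (((0 : ℤ), (0 : ℤ)), ((-1 : ℤ), (1 : ℤ))) a) with hM
  have hstepR : latStep ((0 : ℤ), (0 : ℤ)) ((1 : ℤ), (1 : ℤ)) := Or.inr (by decide)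
  have hstepL : latStep ((0 : ℤ), (0 : ℤ)) ((-1 : ℤ), (1 : ℤ)) := Or.inl (by decide)
  have hM0 : 0 < M := lt_min (hpos _ hstepR) (hpos _ hstepL)
  obtain ⟨q, hq0, hqM⟩ := exists_rat_btwn hM0
  have hq0' : 0 < q := by exact_mod_cast hq0
  obtain ⟨nL, hnL⟩ := hLa q hq0'
  obtain ⟨nR, hnR⟩ := hRa q hq0'
  have hsum : ∀ f : ℕ → ℝ, (∀ j, f j < (q : ℝ) * (3 / 4) ^ j / 4) →
      ∀ i : ℕ, ∑ j ∈ Finset.range i, f j < M := by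
    intro f hf i
    have h1 : ∑ j ∈ Finset.range i, f j ≤ ∑ j ∈ Finset.range i, (q : ℝ) * (3 / 4) ^ j / 4 :=
      Finset.sum_le_sum fun j _ => (hf j).le
    have h2 : ∑ j ∈ Finset.range i, (q : ℝ) * (3 / 4) ^ j / 4
        = (q : ℝ) / 4 * ∑ j ∈ Finset.range i, ((3 : ℝ) / 4) ^ j := by
      rw [Finset.mul_sum]
      exact Finset.sum_congr rfl fun j _ => by ring
    have h3 : ∑ j ∈ Finset.range i, ((3 : ℝ) / 4) ^ j ≤ 4 := by
      rw [geom_sum_eq (by norm_num) i]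
      have h4 : (0 : ℝ) ≤ ((3 : ℝ) / 4) ^ i := by positivity
      have h5 : (((3 : ℝ) / 4) ^ i - 1) / ((3 : ℝ) / 4 - 1) = 4 * (1 - ((3 : ℝ) / 4) ^ i) := by
        ring
      rw [h5]
      nlinarith
    have hq4 : (0 : ℝ) ≤ (q : ℝ) / 4 := by positivity
    have h6 : (q : ℝ) / 4 * ∑ j ∈ Finset.range i, ((3 : ℝ) / 4) ^ j ≤ (q : ℝ) / 4 * 4 :=
      mul_le_mul_of_nonneg_left h3 hq4
    have h7 : (q : ℝ) / 4 * 4 = (q : ℝ) := by ring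
    linarith
  set vl : ℤ × ℤ := (-2 * ((nL : ℤ) + 1), 0) with hvl
  set vr : ℤ × ℤ := (2 * ((nR : ℤ) + 1), 0) with hvr
  have hvlbd : vl ∈ bdH := ⟨⟨-((nL : ℤ) + 1), by rw [hvl]; ring⟩, rfl⟩
  have hvrbd : vr ∈ bdH := ⟨⟨(nR : ℤ) + 1, by rw [hvr]; ring⟩, rfl⟩
  have hvlne : vl ≠ ((0 : ℤ), (0 : ℤ)) := by
    rw [hvl]
    intro h
    rw [Prod.ext_iff] at h
    omega
  have hvrne : vr ≠ ((0 : ℤ), (0 : ℤ)) := by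
    rw [hvr]
    intro h
    rw [Prod.ext_iff] at h
    omega
  have hL : ∀ i : ℕ, rayPt vl (1, 1) i ∉ geoTree w a := by
    refine ray_avoid hpos hvlbd hvlne (Or.inl rfl) fun i => ?_
    exact hsum (fun j => w (ELedge nL j) a) hnL i
  have hR : ∀ i : ℕ, rayPt vr (-1, 1) i ∉ geoTree w a := by
    refine ray_avoid hpos hvrbd hvrne (Or.inr rfl) fun i => ?_
    exact hsum (fun j => w (ERedge nR j) a) hnR i
  refine ⟨vl, vr, hvlbd, hvrbd, by rw [hvl]; simp, by rw [hvr]; simp,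
    fun i => hL i, fun i => hR i, ?_⟩
  exact geoTree_finite_of_rays hpos ((nL : ℤ) + 1) ((nR : ℤ) + 1) (by omega) (by omega) hL hR

/-- In FPP on `H` with exponentially decreasing weights `ω(e) ~ Exp(2^{h(e)})`, almost
surely there are boundary vertices `v_l < 0 < v_r` whose monotone rays
`{v_l + i·θ_r : i ≥ 0}` and `{v_r + i·θ_l : i ≥ 0}` avoid the geodesic tree `T(0)`,
confining `T(0)` to a finite triangle; in particular `T(0)` is finite. -/
theorem geoTree_finite_decreasing {Ω : Type*} [MeasurableSpace Ω] (P : Measure Ω)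
    [IsProbabilityMeasure P] (w : (ℤ × ℤ) × (ℤ × ℤ) → Ω → ℝ)
    (hmeas : ∀ e, Measurable (w e))
    (hind : iIndepFun w P)
    (hexp : ∀ e, latStep e.1 e.2 → IsExpRV P (w e) ((2 : ℝ) ^ (edgeLevel e))) :
    ∀ᵐ a ∂P, ∃ vl vr : ℤ × ℤ, vl ∈ bdH ∧ vr ∈ bdH ∧ vl.1 < 0 ∧ 0 < vr.1 ∧
      (∀ i : ℕ, vl + (i : ℤ) • ((1, 1) : ℤ × ℤ) ∉ geoTree w a) ∧
      (∀ i : ℕ, vr + (i : ℤ) • ((-1, 1) : ℤ × ℤ) ∉ geoTree w a) ∧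
      (geoTree w a).Finite :=
  geoTree_finite_decreasing' P w hmeas hind hexp
end
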